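/- arXiv:1806.03195 — 4 statements merged into one kernel-verified Lean document; each statement's English description precedes it below -/
import Mathlib

section
/- Let τ ∈ (0,1] and let g : ℝ^d → {0,1} be a classifier with a(g) > 0 and b(g) > 0. Then DI(g,X,S) ≤ τ if and only if BER(g,X,S) ≤ 1/2 − (a(g)/2)·(1/τ − 1). -/
open MeasureTheory ProbabilityTheory ENNReal

/-- **Disparate Impact ⇔ Balanced Error Rate bound.**
Let `τ ∈ (0,1]` and `g : ℝ^d → {0,1}` a classifier with `a(g) > 0` and `b(g) > 0`.
Then `DI(g,X,S) ≤ τ` iff `BER(g,X,S) ≤ 1/2 − (a(g)/2)(1/τ − 1)`. -/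
theorem disparateImpact_iff_BER_le
    {Ω : Type*} [MeasurableSpace Ω] (P : Measure Ω) [IsProbabilityMeasure P]
    {d : ℕ} (hd : 1 ≤ d)
    (X : Ω → EuclideanSpace ℝ (Fin d)) (S : Ω → Bool)
    (hX : Measurable X) (hS : Measurable S)
    (hS0 : P {ω | S ω = false} ≠ 0) (hS1 : P {ω | S ω = true} ≠ 0)
    (g : EuclideanSpace ℝ (Fin d) → Bool) (hg : Measurable g)
    (τ : ℝ) (hτ : τ ∈ Set.Ioc (0 : ℝ) 1)
    (a b BER : ℝ)
    (ha : a = (P[|{ω | S ω = false}] {ω | g (X ω) = true}).toReal)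
    (hb : b = (P[|{ω | S ω = true}] {ω | g (X ω) = true}).toReal)
    (hBER : BER = ((P[|{ω | S ω = true}] {ω | g (X ω) = false}).toReal
      + (P[|{ω | S ω = false}] {ω | g (X ω) = true}).toReal) / 2)
    (hapos : 0 < a) (hbpos : 0 < b) :
    a / b ≤ τ ↔ BER ≤ 1 / 2 - (a / 2) * (1 / τ - 1) := by
  obtain ⟨hτ0, hτ1⟩ := hτ
  have hprob : IsProbabilityMeasure (P[|{ω | S ω = true}]) :=
    cond_isProbabilityMeasure hS1
  have hmeas : MeasurableSet {ω | g (X ω) = true} :=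
    (hg.comp hX) (measurableSet_singleton true)
  have hcompl : {ω | g (X ω) = false} = {ω | g (X ω) = true}ᶜ := by
    ext ω; simp [Bool.not_eq_true]
  have hfalse : (P[|{ω | S ω = true}] {ω | g (X ω) = false}).toReal = 1 - b := by
    rw [hcompl, prob_compl_eq_one_sub hmeas, hb,
      ENNReal.toReal_sub_of_le (prob_le_one) (by simp)]
    simp
  have hb1 : b ≤ 1 := by
    rw [hb]; exact ENNReal.toReal_le_of_le_ofReal one_pos.le (by simpa using prob_le_one)
  rw [hBER, hfalse, ← ha, div_le_iff₀ hbpos,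
    show (1:ℝ)/2 - a/2*(1/τ-1) = 1/2 - (a*(1/τ))/2 + a/2 by ring]
  have key : a * (1/τ) ≤ b ↔ a ≤ τ * b := by
    rw [mul_one_div, div_le_iff₀ hτ0, mul_comm]
  constructor <;> intro h
  · linarith [key.mpr h]
  · linarith [key.mp (by linarith)]
end

section
/- Let T_0, T_1 : ℝ^d → ℝ^d be Borel maps and write T_S(X) for the random vector equal to T_s(X) on the event {S=s}. Then the excess risk of the Bayes classifier applied to the transported data satisfies P(g_B(T_S(X), S) ≠ Y) − P(g_B(X,S) ≠ Y) ≤ 2 · E[ |η_S(X) − η_S(T_S(X))| ]. -/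
open MeasureTheory ProbabilityTheory ENNReal

lemma aux_L1 {Ω : Type*} [MeasurableSpace Ω] (P : Measure Ω) [IsProbabilityMeasure P]
    {d : ℕ} (X : Ω → EuclideanSpace ℝ (Fin d)) (S Y : Ω → Bool)
    (hX : Measurable X)
    (η : Bool → EuclideanSpace ℝ (Fin d) → ℝ)
    (hηmeas : ∀ s, Measurable (η s))
    (hreg : ∀ (s : Bool) (A : Set (EuclideanSpace ℝ (Fin d))), MeasurableSet A →
      (P {ω | Y ω = true ∧ X ω ∈ A ∧ S ω = s}).toReal
        = (P {ω | S ω = s}).toReal * ∫ x in A, η s x ∂((P[|{ω | S ω = s}]).map X))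
    (s : Bool) (hs : P {ω | S ω = s} ≠ 0)
    (A : Set (EuclideanSpace ℝ (Fin d))) (hA : MeasurableSet A) :
    (P {ω | Y ω = true ∧ X ω ∈ A ∧ S ω = s}).toReal
      = ∫ ω in {ω | X ω ∈ A ∧ S ω = s}, η s (X ω) ∂P := by
  have hne : (P {ω | S ω = s}).toReal ≠ 0 :=
    ENNReal.toReal_ne_zero.mpr ⟨hs, measure_ne_top P _⟩
  rw [hreg s A hA]
  rw [setIntegral_map hA (hηmeas s).aestronglyMeasurable hX.aemeasurable]
  have h1 : ∫ ω in X ⁻¹' A, η s (X ω) ∂(P[|{ω | S ω = s}])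
      = (P {ω | S ω = s}).toReal⁻¹ * ∫ ω in (X ⁻¹' A) ∩ {ω | S ω = s}, η s (X ω) ∂P := by
    rw [ProbabilityTheory.cond, Measure.restrict_smul, integral_smul_measure,
        Measure.restrict_restrict (hX hA), ENNReal.toReal_inv, smul_eq_mul]
  rw [h1, ← mul_assoc, mul_inv_cancel₀ hne, one_mul]
  rfl

-- L2 : joint with Y=true over classifier sets
lemma aux_L2 {Ω : Type*} [MeasurableSpace Ω] (P : Measure Ω) [IsProbabilityMeasure P]
    {d : ℕ} (X : Ω → EuclideanSpace ℝ (Fin d)) (S Y : Ω → Bool)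
    (hX : Measurable X) (hS : Measurable S) (hY : Measurable Y)
    (hS0 : P {ω | S ω = false} ≠ 0) (hS1 : P {ω | S ω = true} ≠ 0)
    (η : Bool → EuclideanSpace ℝ (Fin d) → ℝ)
    (hηmeas : ∀ s, Measurable (η s))
    (hη01 : ∀ s x, η s x ∈ Set.Icc (0 : ℝ) 1)
    (hreg : ∀ (s : Bool) (A : Set (EuclideanSpace ℝ (Fin d))), MeasurableSet A →
      (P {ω | Y ω = true ∧ X ω ∈ A ∧ S ω = s}).toReal
        = (P {ω | S ω = s}).toReal * ∫ x in A, η s x ∂((P[|{ω | S ω = s}]).map X))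
    (f : EuclideanSpace ℝ (Fin d) × Bool → Bool) (hf : Measurable f) (b : Bool) :
    (P {ω | Y ω = true ∧ f (X ω, S ω) = b}).toReal
      = ∫ ω in {ω | f (X ω, S ω) = b}, η (S ω) (X ω) ∂P := by
  classical
  set A : Bool → Set (EuclideanSpace ℝ (Fin d)) := fun s => {x | f (x, s) = b} with hAdef
  have hA : ∀ s, MeasurableSet (A s) := by
    intro s
    have : Measurable fun x : EuclideanSpace ℝ (Fin d) => f (x, s) :=
      hf.comp (measurable_id.prodMk measurable_const)
    exact this (measurableSet_singleton b)
  have hint : Integrable (fun ω => η (S ω) (X ω)) P := by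
    have hm : Measurable fun ω => η (S ω) (X ω) := by
      have : (fun ω => η (S ω) (X ω))
          = fun ω => if S ω = true then η true (X ω) else η false (X ω) := by
        funext ω; cases h : S ω <;> simp [h]
      rw [this]
      exact Measurable.ite (hS (measurableSet_singleton true))
        ((hηmeas true).comp hX) ((hηmeas false).comp hX)
    refine (integrable_const (1:ℝ)).mono' hm.aestronglyMeasurable ?_
    filter_upwards with ω
    have h0 := (hη01 (S ω) (X ω)).1
    have h1 := (hη01 (S ω) (X ω)).2
    rw [Real.norm_eq_abs, abs_le]; constructor <;> linarith
  -- set decompositions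
  have hsetL : {ω | Y ω = true ∧ f (X ω, S ω) = b}
      = {ω | Y ω = true ∧ X ω ∈ A false ∧ S ω = false}
        ∪ {ω | Y ω = true ∧ X ω ∈ A true ∧ S ω = true} := by
    ext ω; cases h : S ω <;> simp [hAdef, h]
  have hsetR : {ω | f (X ω, S ω) = b}
      = {ω | X ω ∈ A false ∧ S ω = false} ∪ {ω | X ω ∈ A true ∧ S ω = true} := by
    ext ω; cases h : S ω <;> simp [hAdef, h]
  have hmeasYs : ∀ s : Bool, MeasurableSet {ω | Y ω = true ∧ X ω ∈ A s ∧ S ω = s} := by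
    intro s
    exact (hY (measurableSet_singleton true)).inter
      ((hX (hA s)).inter (hS (measurableSet_singleton s)))
  have hmeasXs : ∀ s : Bool, MeasurableSet {ω | X ω ∈ A s ∧ S ω = s} := fun s =>
    (hX (hA s)).inter (hS (measurableSet_singleton s))
  have hdisj : Disjoint {ω | Y ω = true ∧ X ω ∈ A false ∧ S ω = false}
      {ω | Y ω = true ∧ X ω ∈ A true ∧ S ω = true} := by
    rw [Set.disjoint_left]; rintro ω ⟨-, -, h0⟩ ⟨-, -, h1⟩; rw [h0] at h1; exact Bool.noConfusion h1
  have hdisj2 : Disjoint {ω | X ω ∈ A false ∧ S ω = false}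
      {ω | X ω ∈ A true ∧ S ω = true} := by
    rw [Set.disjoint_left]; rintro ω ⟨-, h0⟩ ⟨-, h1⟩; rw [h0] at h1; exact Bool.noConfusion h1
  rw [hsetL, hsetR, measure_union hdisj (hmeasYs true),
    ENNReal.toReal_add (measure_ne_top P _) (measure_ne_top P _),
    setIntegral_union hdisj2 (hmeasXs true) hint.integrableOn hint.integrableOn]
  have key : ∀ s : Bool, (P {ω | Y ω = true ∧ X ω ∈ A s ∧ S ω = s}).toReal
      = ∫ ω in {ω | X ω ∈ A s ∧ S ω = s}, η (S ω) (X ω) ∂P := by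
    intro s
    rw [aux_L1 P X S Y hX η hηmeas hreg s (by cases s; exact hS0; exact hS1) (A s) (hA s)]
    refine setIntegral_congr_fun (hmeasXs s) ?_
    intro ω hω
    simp only [Set.mem_setOf_eq] at hω
    simp [hω.2]
  rw [key false, key true]


lemma aux_risk {Ω : Type*} [MeasurableSpace Ω] (P : Measure Ω) [IsProbabilityMeasure P]
    {d : ℕ} (X : Ω → EuclideanSpace ℝ (Fin d)) (S Y : Ω → Bool)
    (hX : Measurable X) (hS : Measurable S) (hY : Measurable Y)
    (η : Bool → EuclideanSpace ℝ (Fin d) → ℝ)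
    (hη01 : ∀ s x, η s x ∈ Set.Icc (0 : ℝ) 1)
    (f : EuclideanSpace ℝ (Fin d) × Bool → Bool) (hf : Measurable f)
    (hL2 : ∀ b : Bool, (P {ω | Y ω = true ∧ f (X ω, S ω) = b}).toReal
      = ∫ ω in {ω | f (X ω, S ω) = b}, η (S ω) (X ω) ∂P)
    (hhm : Measurable (fun ω => η (S ω) (X ω)))
    (hint : Integrable (fun ω => η (S ω) (X ω)) P) :
    (P {ω | f (X ω, S ω) ≠ Y ω}).toReal
      = ∫ ω, (if f (X ω, S ω) = true then 1 - η (S ω) (X ω) else η (S ω) (X ω)) ∂P := by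
  classical
  have hfXS : Measurable fun ω => f (X ω, S ω) := hf.comp (hX.prodMk hS)
  set F := {ω | f (X ω, S ω) = true} with hFdef
  have hF : MeasurableSet F := hfXS (measurableSet_singleton true)
  have hFc : {ω | f (X ω, S ω) = false} = Fᶜ := by
    ext ω; simp [hFdef, Bool.not_eq_true]
  have hset1 : {ω | f (X ω, S ω) ≠ Y ω}
      = {ω | Y ω = true ∧ f (X ω, S ω) = false}
        ∪ {ω | Y ω = false ∧ f (X ω, S ω) = true} := by
    ext ω; cases hy : Y ω <;> cases hfv : f (X ω, S ω) <;> simp [hy, hfv]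
  have hm2 : MeasurableSet {ω | Y ω = false ∧ f (X ω, S ω) = true} :=
    (hY (measurableSet_singleton false)).inter (hfXS (measurableSet_singleton true))
  have hdisj : Disjoint {ω | Y ω = true ∧ f (X ω, S ω) = false}
      {ω | Y ω = false ∧ f (X ω, S ω) = true} := by
    rw [Set.disjoint_left]; rintro ω ⟨h0, -⟩ ⟨h1, -⟩; rw [h0] at h1; exact Bool.noConfusion h1
  have hset2 : F = {ω | Y ω = true ∧ f (X ω, S ω) = true}
      ∪ {ω | Y ω = false ∧ f (X ω, S ω) = true} := by
    ext ω; cases hy : Y ω <;> simp [hFdef, hy]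
  have hdisj2 : Disjoint {ω | Y ω = true ∧ f (X ω, S ω) = true}
      {ω | Y ω = false ∧ f (X ω, S ω) = true} := by
    rw [Set.disjoint_left]; rintro ω ⟨h0, -⟩ ⟨h1, -⟩; rw [h0] at h1; exact Bool.noConfusion h1
  have e2 : (P {ω | Y ω = false ∧ f (X ω, S ω) = true}).toReal
      = (P F).toReal - ∫ ω in F, η (S ω) (X ω) ∂P := by
    have hPF : P F = P {ω | Y ω = true ∧ f (X ω, S ω) = true}
        + P {ω | Y ω = false ∧ f (X ω, S ω) = true} := by
      rw [hset2]; exact measure_union hdisj2 hm2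
    have := congrArg ENNReal.toReal hPF
    rw [ENNReal.toReal_add (measure_ne_top P _) (measure_ne_top P _), hL2 true] at this
    rw [this]; ring
  have e1 : (P {ω | Y ω = true ∧ f (X ω, S ω) = false}).toReal
      = ∫ ω in Fᶜ, η (S ω) (X ω) ∂P := by
    rw [hL2 false, hFc]
  rw [hset1, measure_union hdisj hm2,
    ENNReal.toReal_add (measure_ne_top P _) (measure_ne_top P _), e1, e2]
  -- RHS
  have hmφ : Measurable
      (fun ω => if f (X ω, S ω) = true then 1 - η (S ω) (X ω) else η (S ω) (X ω)) :=
    Measurable.ite hF (measurable_const.sub hhm) hhm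
  have hφint : Integrable
      (fun ω => if f (X ω, S ω) = true then 1 - η (S ω) (X ω) else η (S ω) (X ω)) P := by
    refine (integrable_const (1:ℝ)).mono' hmφ.aestronglyMeasurable ?_
    filter_upwards with ω
    have h0 := (hη01 (S ω) (X ω)).1
    have h1 := (hη01 (S ω) (X ω)).2
    rw [Real.norm_eq_abs, abs_le]
    by_cases hb : f (X ω, S ω) = true
    · rw [if_pos hb]; constructor <;> linarith
    · rw [if_neg hb]; constructor <;> linarith
  rw [← integral_add_compl hF hφint]
  have eF : ∫ ω in F, (if f (X ω, S ω) = true then 1 - η (S ω) (X ω) else η (S ω) (X ω)) ∂P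
      = (P F).toReal - ∫ ω in F, η (S ω) (X ω) ∂P := by
    have step : ∫ ω in F, (if f (X ω, S ω) = true then 1 - η (S ω) (X ω) else η (S ω) (X ω)) ∂P
        = ∫ ω in F, (1 - η (S ω) (X ω)) ∂P := by
      refine setIntegral_congr_fun hF (fun ω hω => ?_)
      have hb : f (X ω, S ω) = true := hω
      simp [hb]
    rw [step,
      integral_sub (integrable_const (1:ℝ)).integrableOn hint.integrableOn]
    simp [measureReal_def]
  have eFc : ∫ ω in Fᶜ, (if f (X ω, S ω) = true then 1 - η (S ω) (X ω) else η (S ω) (X ω)) ∂P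
      = ∫ ω in Fᶜ, η (S ω) (X ω) ∂P := by
    refine setIntegral_congr_fun hF.compl (fun ω hω => ?_)
    have hb : ¬ f (X ω, S ω) = true := hω
    simp [hb]
  rw [eF, eFc]; ring


/-- **Excess risk of the Bayes classifier on transported data.** For Borel maps
`T₀, T₁ : ℝ^d → ℝ^d`, writing `T_S(X)` for the random vector equal to `T_s(X)` on
`{S=s}`, the Bayes rule `g_B(x,s) = 1_{η_s(x) > 1/2}` satisfies
`P(g_B(T_S(X),S) ≠ Y) − P(g_B(X,S) ≠ Y) ≤ 2 E[|η_S(X) − η_S(T_S(X))|]`. -/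
theorem excess_risk_le_regression_gap
    {Ω : Type*} [MeasurableSpace Ω] (P : Measure Ω) [IsProbabilityMeasure P]
    {d : ℕ} (hd : 1 ≤ d)
    (X : Ω → EuclideanSpace ℝ (Fin d)) (S Y : Ω → Bool)
    (hX : Measurable X) (hS : Measurable S) (hY : Measurable Y)
    (hS0 : P {ω | S ω = false} ≠ 0) (hS1 : P {ω | S ω = true} ≠ 0)
    (η : Bool → EuclideanSpace ℝ (Fin d) → ℝ)
    (hηmeas : ∀ s, Measurable (η s))
    (hη01 : ∀ s x, η s x ∈ Set.Icc (0 : ℝ) 1)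
    (hreg : ∀ (s : Bool) (A : Set (EuclideanSpace ℝ (Fin d))), MeasurableSet A →
      (P {ω | Y ω = true ∧ X ω ∈ A ∧ S ω = s}).toReal
        = (P {ω | S ω = s}).toReal * ∫ x in A, η s x ∂((P[|{ω | S ω = s}]).map X))
    (T : Bool → EuclideanSpace ℝ (Fin d) → EuclideanSpace ℝ (Fin d))
    (hT : ∀ s, Measurable (T s))
    (gB : EuclideanSpace ℝ (Fin d) × Bool → Bool) (hgBmeas : Measurable gB)
    (hgB : ∀ x s, gB (x, s) = true ↔ 1 / 2 < η s x) :
    (P {ω | gB (T (S ω) (X ω), S ω) ≠ Y ω}).toReal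
        - (P {ω | gB (X ω, S ω) ≠ Y ω}).toReal
      ≤ 2 * ∫ ω, |η (S ω) (X ω) - η (S ω) (T (S ω) (X ω))| ∂P := by
  classical
  -- measurability and integrability of h and h'
  have hhm : Measurable (fun ω => η (S ω) (X ω)) := by
    have e : (fun ω => η (S ω) (X ω))
        = fun ω => if S ω = true then η true (X ω) else η false (X ω) := by
      funext ω; cases h : S ω <;> simp [h]
    rw [e]
    exact Measurable.ite (hS (measurableSet_singleton true))
      ((hηmeas true).comp hX) ((hηmeas false).comp hX)
  have hh'm : Measurable (fun ω => η (S ω) (T (S ω) (X ω))) := by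
    have e : (fun ω => η (S ω) (T (S ω) (X ω)))
        = fun ω => if S ω = true then η true (T true (X ω)) else η false (T false (X ω)) := by
      funext ω; cases h : S ω <;> simp [h]
    rw [e]
    exact Measurable.ite (hS (measurableSet_singleton true))
      ((hηmeas true).comp ((hT true).comp hX)) ((hηmeas false).comp ((hT false).comp hX))
  have hint : Integrable (fun ω => η (S ω) (X ω)) P := by
    refine (integrable_const (1:ℝ)).mono' hhm.aestronglyMeasurable ?_
    filter_upwards with ω
    have h0 := (hη01 (S ω) (X ω)).1
    have h1 := (hη01 (S ω) (X ω)).2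
    rw [Real.norm_eq_abs, abs_le]; constructor <;> linarith
  have hint' : Integrable (fun ω => η (S ω) (T (S ω) (X ω))) P := by
    refine (integrable_const (1:ℝ)).mono' hh'm.aestronglyMeasurable ?_
    filter_upwards with ω
    have h0 := (hη01 (S ω) (T (S ω) (X ω))).1
    have h1 := (hη01 (S ω) (T (S ω) (X ω))).2
    rw [Real.norm_eq_abs, abs_le]; constructor <;> linarith
  have hgapint : Integrable (fun ω => |η (S ω) (X ω) - η (S ω) (T (S ω) (X ω))|) P :=
    (hint.sub hint').abs
  -- the transported classifier
  set f₁ : EuclideanSpace ℝ (Fin d) × Bool → Bool :=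
    fun p => if p.2 = true then gB (T true p.1, true) else gB (T false p.1, false) with hf₁def
  have hf₁ : Measurable f₁ := by
    refine Measurable.ite (measurable_snd (measurableSet_singleton true)) ?_ ?_
    · exact hgBmeas.comp (((hT true).comp measurable_fst).prodMk measurable_const)
    · exact hgBmeas.comp (((hT false).comp measurable_fst).prodMk measurable_const)
  have hf₁eval : ∀ ω, f₁ (X ω, S ω) = gB (T (S ω) (X ω), S ω) := by
    intro ω; cases h : S ω <;> simp [hf₁def, h]
  -- risk formulas
  have R₁ := aux_risk P X S Y hX hS hY η hη01 f₁ hf₁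
    (aux_L2 P X S Y hX hS hY hS0 hS1 η hηmeas hη01 hreg f₁ hf₁) hhm hint
  have R₂ := aux_risk P X S Y hX hS hY η hη01 gB hgBmeas
    (aux_L2 P X S Y hX hS hY hS0 hS1 η hηmeas hη01 hreg gB hgBmeas) hhm hint
  have hsetEq : {ω | gB (T (S ω) (X ω), S ω) ≠ Y ω} = {ω | f₁ (X ω, S ω) ≠ Y ω} := by
    ext ω; simp only [Set.mem_setOf_eq, hf₁eval ω]
  rw [hsetEq, R₁, R₂]
  -- integrability of the two integrands
  have hφint : ∀ (f : EuclideanSpace ℝ (Fin d) × Bool → Bool), Measurable f →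
      Integrable (fun ω => if f (X ω, S ω) = true then 1 - η (S ω) (X ω) else η (S ω) (X ω)) P := by
    intro f hf
    have hmφ : Measurable
        (fun ω => if f (X ω, S ω) = true then 1 - η (S ω) (X ω) else η (S ω) (X ω)) :=
      Measurable.ite ((hf.comp (hX.prodMk hS)) (measurableSet_singleton true))
        (measurable_const.sub hhm) hhm
    refine (integrable_const (1:ℝ)).mono' hmφ.aestronglyMeasurable ?_
    filter_upwards with ω
    have h0 := (hη01 (S ω) (X ω)).1
    have h1 := (hη01 (S ω) (X ω)).2
    rw [Real.norm_eq_abs, abs_le]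
    by_cases hb : f (X ω, S ω) = true
    · rw [if_pos hb]; constructor <;> linarith
    · rw [if_neg hb]; constructor <;> linarith
  have key : ∫ ω, (if f₁ (X ω, S ω) = true then 1 - η (S ω) (X ω) else η (S ω) (X ω)) ∂P
      ≤ ∫ ω, (2 * |η (S ω) (X ω) - η (S ω) (T (S ω) (X ω))|
          + (if gB (X ω, S ω) = true then 1 - η (S ω) (X ω) else η (S ω) (X ω))) ∂P := by
    refine integral_mono (hφint f₁ hf₁) ((hgapint.const_mul 2).add (hφint gB hgBmeas)) ?_
    intro ω
    have hc1 : f₁ (X ω, S ω) = true ↔ 1 / 2 < η (S ω) (T (S ω) (X ω)) := by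
      rw [hf₁eval ω]; exact hgB _ _
    have hc2 : gB (X ω, S ω) = true ↔ 1 / 2 < η (S ω) (X ω) := hgB _ _
    have l1 := le_abs_self (η (S ω) (X ω) - η (S ω) (T (S ω) (X ω)))
    have l2 := neg_abs_le (η (S ω) (X ω) - η (S ω) (T (S ω) (X ω)))
    have l3 := abs_nonneg (η (S ω) (X ω) - η (S ω) (T (S ω) (X ω)))
    simp only [Pi.add_apply]
    by_cases h1 : (1:ℝ) / 2 < η (S ω) (T (S ω) (X ω)) <;>
      by_cases h2 : (1:ℝ) / 2 < η (S ω) (X ω)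
    · rw [if_pos (hc1.mpr h1), if_pos (hc2.mpr h2)]; linarith
    · rw [if_pos (hc1.mpr h1), if_neg (fun hb => h2 (hc2.mp hb))]
      have := not_lt.mp h2; linarith
    · rw [if_neg (fun hb => h1 (hc1.mp hb)), if_pos (hc2.mpr h2)]
      have := not_lt.mp h1; linarith
    · rw [if_neg (fun hb => h1 (hc1.mp hb)), if_neg (fun hb => h2 (hc2.mp hb))]; linarith
  rw [integral_add (hgapint.const_mul 2) (hφint gB hgBmeas), integral_const_mul] at key
  linarith
end

section
/- Let μ_0, μ_1 be Borel probability measures on ℝ^d with finite second moments and let T : ℝ^d → ℝ^d be a Borel map with T_♯ μ_0 = μ_1 and ∫ ‖x − T(x)‖² dμ_0(x) = W₂²(μ_0, μ_1). For λ ∈ [0,1] set μ_λ := ((1−λ)·Id + λ·T)_♯ μ_0. Then: (i) the map (1−λ)·Id + λ·T is an optimal transport map from μ_0 to μ_λ, i.e. ∫ ‖x − ((1−λ)x + λT(x))‖² dμ_0(x) = W₂²(μ_0, μ_λ); (ii) μ_λ is the weighted Wasserstein barycenter of μ_0 and μ_1 with weights 1−λ and λ, i.e. for every Borel probability measure ν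 on ℝ^d with finite second moment, (1−λ)·W₂²(μ_λ, μ_0) + λ·W₂²(μ_λ, μ_1) ≤ (1−λ)·W₂²(ν, μ_0) + λ·W₂²(ν, μ_1), with minimal value λ(1−λ)·W₂²(μ_0, μ_1). -/
open MeasureTheory ProbabilityTheory ENNReal

/-- The squared quadratic Wasserstein distance `W₂²(μ,ν)`, as an infimum of the
quadratic transportation cost over all couplings of `μ` and `ν`. -/
noncomputable def W2sq {d : ℕ} (μ ν : Measure (EuclideanSpace ℝ (Fin d))) : ℝ :=
  (⨅ π : {π : Measure (EuclideanSpace ℝ (Fin d) × EuclideanSpace ℝ (Fin d)) //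
      π.map Prod.fst = μ ∧ π.map Prod.snd = ν},
    ∫⁻ p : EuclideanSpace ℝ (Fin d) × EuclideanSpace ℝ (Fin d),
      (‖p.1 - p.2‖₊ : ℝ≥0∞) ^ 2 ∂(π.1)).toReal

namespace McCannAux

variable {d : ℕ}

local notation "E" => EuclideanSpace ℝ (Fin d)

/-- quadratic cost of a coupling -/
noncomputable def cost (π : Measure (E × E)) : ℝ≥0∞ :=
  ∫⁻ p : E × E, (‖p.1 - p.2‖₊ : ℝ≥0∞) ^ 2 ∂π

/-- squared Wasserstein distance, `ℝ≥0∞`-valued -/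
noncomputable def W2E (μ ν : Measure E) : ℝ≥0∞ :=
  ⨅ π : {π : Measure (E × E) // π.map Prod.fst = μ ∧ π.map Prod.snd = ν}, cost π.1

lemma costMeasurable : Measurable (fun p : E × E => (‖p.1 - p.2‖₊ : ℝ≥0∞) ^ 2) :=
  ((measurable_fst.sub measurable_snd).nnnorm.coe_nnreal_ennreal).pow_const 2

lemma W2E_le_cost {μ ν : Measure E} {π : Measure (E × E)}
    (h1 : π.map Prod.fst = μ) (h2 : π.map Prod.snd = ν) : W2E μ ν ≤ cost π :=
  iInf_le _ (⟨π, h1, h2⟩ : {π : Measure (E × E) // π.map Prod.fst = μ ∧ π.map Prod.snd = ν})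

lemma isProb_coupling {μ : Measure E} [IsProbabilityMeasure μ] {π : Measure (E × E)}
    (h1 : π.map Prod.fst = μ) : IsProbabilityMeasure π := by
  constructor
  have := congrArg (fun m : Measure E => m Set.univ) h1
  simp only [Measure.map_apply measurable_fst MeasurableSet.univ, Set.preimage_univ] at this
  rw [this]; exact measure_univ

lemma sq_add_le (x y : ℝ≥0∞) : (x + y) ^ 2 ≤ 3 * x ^ 2 + 3 * y ^ 2 := by
  have hxy : x * y ≤ x ^ 2 + y ^ 2 := by
    rcases le_total x y with h | h
    · calc x * y ≤ y * y := mul_le_mul_left h y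
        _ = y ^ 2 := (sq y).symm
        _ ≤ x ^ 2 + y ^ 2 := le_add_self
    · calc x * y ≤ x * x := mul_le_mul_right h x
        _ = x ^ 2 := (sq x).symm
        _ ≤ x ^ 2 + y ^ 2 := le_self_add
  calc (x + y) ^ 2 = x ^ 2 + y ^ 2 + (x * y + x * y) := by ring
    _ ≤ x ^ 2 + y ^ 2 + (x ^ 2 + y ^ 2 + (x ^ 2 + y ^ 2)) := by gcongr <;> exact hxy
    _ = 3 * x ^ 2 + 3 * y ^ 2 := by ring

lemma nnnorm_sq_sub_le (a b : E) :
    (‖a - b‖₊ : ℝ≥0∞) ^ 2 ≤ 3 * (‖a‖₊ : ℝ≥0∞) ^ 2 + 3 * (‖b‖₊ : ℝ≥0∞) ^ 2 := by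
  refine le_trans ?_ (sq_add_le _ _)
  gcongr
  exact_mod_cast nnnorm_sub_le a b

lemma lintegral_fst {μ : Measure E} {π : Measure (E × E)} (h : π.map Prod.fst = μ)
    {f : E → ℝ≥0∞} (hf : Measurable f) : ∫⁻ p : E × E, f p.1 ∂π = ∫⁻ x, f x ∂μ := by
  rw [← h, lintegral_map hf measurable_fst]

lemma lintegral_snd {ν : Measure E} {π : Measure (E × E)} (h : π.map Prod.snd = ν)
    {f : E → ℝ≥0∞} (hf : Measurable f) : ∫⁻ p : E × E, f p.2 ∂π = ∫⁻ x, f x ∂ν := by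
  rw [← h, lintegral_map hf measurable_snd]

lemma W2E_ne_top (μ ν : Measure E) [IsProbabilityMeasure μ] [IsProbabilityMeasure ν]
    (hμ : ∫⁻ x, (‖x‖₊ : ℝ≥0∞) ^ 2 ∂μ ≠ ⊤) (hν : ∫⁻ x, (‖x‖₊ : ℝ≥0∞) ^ 2 ∂ν ≠ ⊤) :
    W2E μ ν ≠ ⊤ := by
  have h1 : (μ.prod ν).map Prod.fst = μ := by simp
  have h2 : (μ.prod ν).map Prod.snd = ν := by simp
  refine ne_top_of_le_ne_top ?_ (W2E_le_cost h1 h2)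
  have hle : cost (μ.prod ν)
      ≤ ∫⁻ p : E × E, (3 * (‖p.1‖₊ : ℝ≥0∞) ^ 2 + 3 * (‖p.2‖₊ : ℝ≥0∞) ^ 2) ∂(μ.prod ν) :=
    lintegral_mono fun p => nnnorm_sq_sub_le p.1 p.2
  have hm : Measurable (fun x : E => (‖x‖₊ : ℝ≥0∞) ^ 2) :=
    (measurable_nnnorm.coe_nnreal_ennreal).pow_const 2
  have hm1 : Measurable (fun p : E × E => (‖p.1‖₊ : ℝ≥0∞) ^ 2) :=
    (measurable_fst.nnnorm.coe_nnreal_ennreal).pow_const 2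
  have hm2 : Measurable (fun p : E × E => (‖p.2‖₊ : ℝ≥0∞) ^ 2) :=
    (measurable_snd.nnnorm.coe_nnreal_ennreal).pow_const 2
  rw [lintegral_add_left (hm1.const_mul 3)] at hle
  rw [lintegral_const_mul 3 hm1, lintegral_const_mul 3 hm2] at hle
  rw [show (∫⁻ p : E × E, (‖p.1‖₊ : ℝ≥0∞) ^ 2 ∂(μ.prod ν)) = ∫⁻ x, (‖x‖₊ : ℝ≥0∞) ^ 2 ∂μ
      from lintegral_fst h1 hm,
    show (∫⁻ p : E × E, (‖p.2‖₊ : ℝ≥0∞) ^ 2 ∂(μ.prod ν)) = ∫⁻ x, (‖x‖₊ : ℝ≥0∞) ^ 2 ∂ν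
      from lintegral_snd h2 hm] at hle
  exact ne_top_of_le_ne_top (by finiteness) hle

lemma cost_map_swap (π : Measure (E × E)) : cost (π.map Prod.swap) = cost π := by
  rw [cost, cost, lintegral_map costMeasurable measurable_swap]
  refine lintegral_congr fun p => ?_
  simp only [Prod.fst_swap, Prod.snd_swap]
  rw [show p.2 - p.1 = -(p.1 - p.2) from by abel, nnnorm_neg]

lemma map_swap_fst (π : Measure (E × E)) : (π.map Prod.swap).map Prod.fst = π.map Prod.snd := by
  rw [Measure.map_map measurable_fst measurable_swap]; rfl

lemma map_swap_snd (π : Measure (E × E)) : (π.map Prod.swap).map Prod.snd = π.map Prod.fst := by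
  rw [Measure.map_map measurable_snd measurable_swap]; rfl

lemma W2E_comm (μ ν : Measure E) : W2E μ ν = W2E ν μ := by
  have key : ∀ (μ' ν' : Measure E), W2E μ' ν' ≤ W2E ν' μ' := by
    intro μ' ν'
    refine le_iInf fun π => ?_
    rw [← cost_map_swap π.1]
    exact W2E_le_cost (by rw [map_swap_fst]; exact π.2.2) (by rw [map_swap_snd]; exact π.2.1)
  exact le_antisymm (key μ ν) (key ν μ)


lemma indicator_comp {α β : Type*} (f : α → β) (s : Set β) (x : α) :
    (f ⁻¹' s).indicator (fun _ => (1 : ℝ≥0∞)) x = s.indicator (fun _ => (1 : ℝ≥0∞)) (f x) := by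
  by_cases h : f x ∈ s <;> simp [h]

lemma map_eq_of_lintegral {α β : Type*} [MeasurableSpace α] [MeasurableSpace β]
    {m : Measure α} {f : α → β} (hf : Measurable f) {m' : Measure β}
    (h : ∀ g : β → ℝ≥0∞, Measurable g → ∫⁻ a, g (f a) ∂m = ∫⁻ b, g b ∂m') :
    m.map f = m' := by
  ext s hs
  have h2 := h (s.indicator fun _ => (1 : ℝ≥0∞)) (measurable_const.indicator hs)
  have l1 : ∫⁻ a, s.indicator (fun _ => (1 : ℝ≥0∞)) (f a) ∂m = m (f ⁻¹' s) := by
    rw [show (fun a => s.indicator (fun _ => (1 : ℝ≥0∞)) (f a))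
        = (f ⁻¹' s).indicator (fun _ => (1 : ℝ≥0∞))
      from funext fun a => (indicator_comp f s a).symm,
      lintegral_indicator_const (hf hs), one_mul]
  have l2 : ∫⁻ b, s.indicator (fun _ => (1 : ℝ≥0∞)) b ∂m' = m' s := by
    rw [lintegral_indicator_const hs, one_mul]
  rw [Measure.map_apply hf hs, ← l1, h2, l2]

lemma rpow_half_sq (x : ℝ≥0∞) : (x ^ (1/2 : ℝ)) ^ (2 : ℕ) = x := by
  rw [← ENNReal.rpow_natCast _ 2, ← ENNReal.rpow_mul]; norm_num

lemma npow_two_rpow (x : ℝ≥0∞) : x ^ (2 : ℕ) = x ^ ((2 : ℕ) : ℝ) := by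
  rw [ENNReal.rpow_natCast]

/-- **Gluing / triangle inequality** for `W2E`. -/
lemma W2E_triangle (μ ν ρ : Measure E) [IsProbabilityMeasure μ] [IsProbabilityMeasure ν]
    [IsProbabilityMeasure ρ] :
    W2E μ ρ ^ (1/2 : ℝ) ≤ W2E μ ν ^ (1/2 : ℝ) + W2E ν ρ ^ (1/2 : ℝ) := by
  have key : ∀ (π₁ : {π : Measure (E × E) // π.map Prod.fst = μ ∧ π.map Prod.snd = ν})
      (π₂ : {π : Measure (E × E) // π.map Prod.fst = ν ∧ π.map Prod.snd = ρ}),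
      W2E μ ρ ^ (1/2 : ℝ) ≤ cost π₁.1 ^ (1/2 : ℝ) + cost π₂.1 ^ (1/2 : ℝ) := by
    rintro ⟨π₁, h₁f, h₁s⟩ ⟨π₂, h₂f, h₂s⟩
    haveI : IsProbabilityMeasure π₁ := isProb_coupling h₁f
    haveI : IsProbabilityMeasure π₂ := isProb_coupling h₂f
    set η₁ : Measure (E × E) := π₁.map Prod.swap with hη₁def
    haveI : IsProbabilityMeasure η₁ := Measure.isProbabilityMeasure_map measurable_swap.aemeasurable
    have hη₁fst : η₁.map Prod.fst = ν := by rw [hη₁def, map_swap_fst, h₁s]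
    have hη₁snd : η₁.map Prod.snd = μ := by rw [hη₁def, map_swap_snd, h₁f]
    set κ₁ := η₁.condKernel with hκ₁def
    set κ₂ := π₂.condKernel with hκ₂def
    have hd₁ : ν ⊗ₘ κ₁ = η₁ := by
      have h := η₁.disintegrate η₁.condKernel
      rwa [show η₁.fst = ν from hη₁fst] at h
    have hd₂ : ν ⊗ₘ κ₂ = π₂ := by
      have h := π₂.disintegrate π₂.condKernel
      rwa [show π₂.fst = ν from h₂f] at h
    set SS : Measure (E × (E × E)) := ν ⊗ₘ (κ₁ ×ₖ κ₂) with hSSdef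
    -- projections of SS
    have hproj1 : ∀ g : E × E → ℝ≥0∞, Measurable g →
        ∫⁻ p : E × (E × E), g (p.1, p.2.1) ∂SS = ∫⁻ q : E × E, g q ∂η₁ := by
      intro g hg
      rw [hSSdef, Measure.lintegral_compProd (f := fun p : E × (E × E) => g (p.1, p.2.1))
        (hg.comp (measurable_fst.prodMk measurable_snd.fst))]
      rw [← hd₁, Measure.lintegral_compProd hg]
      refine lintegral_congr fun y => ?_
      rw [Kernel.lintegral_prod _ _ _ (g := fun w : E × E => g (y, w.1))
        (hg.comp (measurable_const.prodMk measurable_fst))]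
      exact lintegral_congr fun b => by simp [lintegral_const]
    have hproj2 : ∀ g : E × E → ℝ≥0∞, Measurable g →
        ∫⁻ p : E × (E × E), g (p.1, p.2.2) ∂SS = ∫⁻ q : E × E, g q ∂π₂ := by
      intro g hg
      rw [hSSdef, Measure.lintegral_compProd (f := fun p : E × (E × E) => g (p.1, p.2.2))
        (hg.comp (measurable_fst.prodMk measurable_snd.snd))]
      rw [← hd₂, Measure.lintegral_compProd hg]
      refine lintegral_congr fun y => ?_
      rw [Kernel.lintegral_prod _ _ _ (g := fun w : E × E => g (y, w.2))
        (hg.comp (measurable_const.prodMk measurable_snd))]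
      trans ∫⁻ _b : E, (∫⁻ c, g (y, c) ∂κ₂ y) ∂κ₁ y
      · rfl
      · rw [lintegral_const]; simp
    -- the glued coupling
    set σm : Measure (E × E) := SS.map Prod.snd with hσdef
    have hσf : σm.map Prod.fst = μ := by
      rw [hσdef, Measure.map_map measurable_fst measurable_snd]
      refine map_eq_of_lintegral (measurable_fst.comp measurable_snd) fun g hg => ?_
      have := hproj1 (fun q => g q.2) (hg.comp measurable_snd)
      simp only at this
      rw [show (∫⁻ p : E × (E × E), g ((Prod.fst ∘ Prod.snd) p) ∂SS)
          = ∫⁻ p : E × (E × E), g p.2.1 ∂SS from rfl, this, ← hη₁snd,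
        lintegral_map hg measurable_snd]
    have hσs : σm.map Prod.snd = ρ := by
      rw [hσdef, Measure.map_map measurable_snd measurable_snd]
      refine map_eq_of_lintegral (measurable_snd.comp measurable_snd) fun g hg => ?_
      have := hproj2 (fun q => g q.2) (hg.comp measurable_snd)
      simp only at this
      rw [show (∫⁻ p : E × (E × E), g ((Prod.snd ∘ Prod.snd) p) ∂SS)
          = ∫⁻ p : E × (E × E), g p.2.2 ∂SS from rfl, this, ← h₂s,
        lintegral_map hg measurable_snd]
    -- cost estimate via Minkowski
    set f : E × (E × E) → ℝ≥0∞ := fun p => (‖p.2.1 - p.1‖₊ : ℝ≥0∞) with hfdef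
    set g : E × (E × E) → ℝ≥0∞ := fun p => (‖p.1 - p.2.2‖₊ : ℝ≥0∞) with hgdef
    have hf : Measurable f := (measurable_snd.fst.sub measurable_fst).nnnorm.coe_nnreal_ennreal
    have hg : Measurable g := (measurable_fst.sub measurable_snd.snd).nnnorm.coe_nnreal_ennreal
    have hcostσ : cost σm = ∫⁻ p : E × (E × E), (‖p.2.1 - p.2.2‖₊ : ℝ≥0∞) ^ 2 ∂SS := by
      rw [hσdef, cost, lintegral_map costMeasurable measurable_snd]
    have hptw : ∀ p : E × (E × E), (‖p.2.1 - p.2.2‖₊ : ℝ≥0∞) ≤ f p + g p := by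
      intro p
      rw [hfdef, hgdef]
      calc (‖p.2.1 - p.2.2‖₊ : ℝ≥0∞) = (‖(p.2.1 - p.1) + (p.1 - p.2.2)‖₊ : ℝ≥0∞) := by
            congr 1; abel
        _ ≤ (‖p.2.1 - p.1‖₊ : ℝ≥0∞) + (‖p.1 - p.2.2‖₊ : ℝ≥0∞) := by
            exact_mod_cast nnnorm_add_le _ _
    have hmink := ENNReal.lintegral_Lp_add_le (μ := SS) (p := 2) hf.aemeasurable
      hg.aemeasurable one_le_two
    have e2 : ∫⁻ p, f p ^ (2 : ℝ) ∂SS = cost π₁ := by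
      have hm2 : Measurable (fun q : E × E => (‖q.2 - q.1‖₊ : ℝ≥0∞) ^ 2) :=
        ((measurable_snd.sub measurable_fst).nnnorm.coe_nnreal_ennreal).pow_const 2
      have h := hproj1 (fun q => (‖q.2 - q.1‖₊ : ℝ≥0∞) ^ 2) hm2
      simp only at h
      calc ∫⁻ p, f p ^ (2 : ℝ) ∂SS
          = ∫⁻ p : E × (E × E), (‖p.2.1 - p.1‖₊ : ℝ≥0∞) ^ (2 : ℕ) ∂SS := by
            refine lintegral_congr fun p => ?_
            rw [hfdef, npow_two_rpow]; norm_num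
        _ = ∫⁻ q : E × E, (‖q.2 - q.1‖₊ : ℝ≥0∞) ^ 2 ∂η₁ := h
        _ = cost π₁ := by
            rw [hη₁def, lintegral_map hm2 measurable_swap, cost]
            exact lintegral_congr fun q => by simp
    have e3 : ∫⁻ p, g p ^ (2 : ℝ) ∂SS = cost π₂ := by
      have h := hproj2 (fun q => (‖q.1 - q.2‖₊ : ℝ≥0∞) ^ 2) costMeasurable
      simp only at h
      calc ∫⁻ p, g p ^ (2 : ℝ) ∂SS
          = ∫⁻ p : E × (E × E), (‖p.1 - p.2.2‖₊ : ℝ≥0∞) ^ (2 : ℕ) ∂SS := by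
            refine lintegral_congr fun p => ?_
            rw [hgdef, npow_two_rpow]; norm_num
        _ = ∫⁻ q : E × E, (‖q.1 - q.2‖₊ : ℝ≥0∞) ^ 2 ∂π₂ := h
        _ = cost π₂ := rfl
    calc W2E μ ρ ^ (1/2 : ℝ)
        ≤ cost σm ^ (1/2 : ℝ) := ENNReal.rpow_le_rpow (W2E_le_cost hσf hσs) (by norm_num)
      _ ≤ (∫⁻ p, (f p + g p) ^ (2 : ℝ) ∂SS) ^ (1/2 : ℝ) := by
          refine ENNReal.rpow_le_rpow ?_ (by norm_num)
          rw [hcostσ]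
          refine lintegral_mono fun p => ?_
          rw [show ((f p + g p) ^ (2:ℝ)) = (f p + g p) ^ (2:ℕ) from by
            rw [npow_two_rpow]; norm_num]
          exact pow_le_pow_left' (hptw p) 2
      _ ≤ (∫⁻ p, f p ^ (2 : ℝ) ∂SS) ^ (1/2 : ℝ) + (∫⁻ p, g p ^ (2 : ℝ) ∂SS) ^ (1/2 : ℝ) := by
          simpa using hmink
      _ = cost π₁ ^ (1/2 : ℝ) + cost π₂ ^ (1/2 : ℝ) := by rw [e2, e3]
  have h1 : W2E μ ν ^ (1/2 : ℝ)
      = ⨅ π₁ : {π : Measure (E × E) // π.map Prod.fst = μ ∧ π.map Prod.snd = ν},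
        cost π₁.1 ^ (1/2 : ℝ) := by
    rw [W2E]
    exact (ENNReal.orderIsoRpow (1/2) (by norm_num)).map_iInf _
  have h2 : W2E ν ρ ^ (1/2 : ℝ)
      = ⨅ π₂ : {π : Measure (E × E) // π.map Prod.fst = ν ∧ π.map Prod.snd = ρ},
        cost π₂.1 ^ (1/2 : ℝ) := by
    rw [W2E]
    exact (ENNReal.orderIsoRpow (1/2) (by norm_num)).map_iInf _
  rw [h1, h2, ENNReal.iInf_add]
  refine le_iInf fun π₁ => ?_
  rw [ENNReal.add_iInf]
  exact le_iInf fun π₂ => key π₁ π₂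

lemma cost_map (μ : Measure E) {S R : E → E} (hS : Measurable S) (hR : Measurable R) :
    cost (μ.map fun x => (S x, R x)) = ∫⁻ x, (‖S x - R x‖₊ : ℝ≥0∞) ^ 2 ∂μ := by
  rw [cost, lintegral_map costMeasurable (hS.prodMk hR)]

lemma map_coupling_fst (μ : Measure E) {S R : E → E} (hS : Measurable S) (hR : Measurable R) :
    (μ.map fun x => (S x, R x)).map Prod.fst = μ.map S := by
  rw [Measure.map_map measurable_fst (hS.prodMk hR)]; rfl

lemma map_coupling_snd (μ : Measure E) {S R : E → E} (hS : Measurable S) (hR : Measurable R) :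
    (μ.map fun x => (S x, R x)).map Prod.snd = μ.map R := by
  rw [Measure.map_map measurable_snd (hS.prodMk hR)]; rfl

end McCannAux

open McCannAux in
/-- **The McCann interpolant is the weighted Wasserstein barycenter.** If `T` pushes
`μ₀` optimally to `μ₁` and `μ_λ = ((1−λ)Id + λT)♯ μ₀` for `λ ∈ [0,1]`, then:
(i) `(1−λ)Id + λT` is an optimal transport map from `μ₀` to `μ_λ`;
(ii) `μ_λ` minimizes `ν ↦ (1−λ)W₂²(ν,μ₀) + λW₂²(ν,μ₁)` over probability measures `ν`
with finite second moment, with minimal value `λ(1−λ)W₂²(μ₀,μ₁)`. -/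
theorem mccann_interpolant_is_barycenter
    {d : ℕ} (hd : 1 ≤ d)
    (μ₀ μ₁ : Measure (EuclideanSpace ℝ (Fin d)))
    [IsProbabilityMeasure μ₀] [IsProbabilityMeasure μ₁]
    (hμ₀2 : ∫⁻ x, (‖x‖₊ : ℝ≥0∞) ^ 2 ∂μ₀ ≠ ⊤)
    (hμ₁2 : ∫⁻ x, (‖x‖₊ : ℝ≥0∞) ^ 2 ∂μ₁ ≠ ⊤)
    (T : EuclideanSpace ℝ (Fin d) → EuclideanSpace ℝ (Fin d)) (hT : Measurable T)
    (hpush : μ₀.map T = μ₁)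
    (hoptimal : ∫ x, ‖x - T x‖ ^ 2 ∂μ₀ = W2sq μ₀ μ₁)
    (lam : ℝ) (hlam : lam ∈ Set.Icc (0 : ℝ) 1)
    (μlam : Measure (EuclideanSpace ℝ (Fin d)))
    (hμlam : μlam = μ₀.map (fun x => (1 - lam) • x + lam • T x)) :
    (∫ x, ‖x - ((1 - lam) • x + lam • T x)‖ ^ 2 ∂μ₀ = W2sq μ₀ μlam)
      ∧ (∀ ν : Measure (EuclideanSpace ℝ (Fin d)), IsProbabilityMeasure ν →
          ∫⁻ x, (‖x‖₊ : ℝ≥0∞) ^ 2 ∂ν ≠ ⊤ →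
          (1 - lam) * W2sq μlam μ₀ + lam * W2sq μlam μ₁
            ≤ (1 - lam) * W2sq ν μ₀ + lam * W2sq ν μ₁)
      ∧ (1 - lam) * W2sq μlam μ₀ + lam * W2sq μlam μ₁
          = lam * (1 - lam) * W2sq μ₀ μ₁ := by
  obtain ⟨hlam0, hlam1⟩ := hlam
  have W2sq_def : ∀ μ ν : Measure (EuclideanSpace ℝ (Fin d)),
      W2sq μ ν = (W2E μ ν).toReal := fun _ _ => rfl
  set Slam : EuclideanSpace ℝ (Fin d) → EuclideanSpace ℝ (Fin d) :=
    fun x => (1 - lam) • x + lam • T x with hSlamdef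
  have hSlam : Measurable Slam := (measurable_id.const_smul (1 - lam)).add (hT.const_smul lam)
  haveI : IsProbabilityMeasure μlam := by
    rw [hμlam]; exact Measure.isProbabilityMeasure_map hSlam.aemeasurable
  have hmpair0 : Measurable fun x : EuclideanSpace ℝ (Fin d) => (x, Slam x) :=
    measurable_id'.prodMk hSlam
  have hmpair1 : Measurable fun x : EuclideanSpace ℝ (Fin d) => (Slam x, T x) :=
    hSlam.prodMk hT
  have hmpairT : Measurable fun x : EuclideanSpace ℝ (Fin d) => (x, T x) :=
    measurable_id'.prodMk hT
  have hptw0 : ∀ x, x - Slam x = lam • (x - T x) := by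
    intro x; rw [hSlamdef]; simp only
    simp only [smul_sub, sub_smul, one_smul]; abel
  have hptw1 : ∀ x, Slam x - T x = (1 - lam) • (x - T x) := by
    intro x; rw [hSlamdef]; simp only
    simp only [smul_sub, sub_smul, one_smul]; abel
  set c2 : ℝ≥0∞ := ∫⁻ x, (‖x - T x‖₊ : ℝ≥0∞) ^ 2 ∂μ₀ with hc2def
  have hmxT : Measurable fun x : EuclideanSpace ℝ (Fin d) => (‖x - T x‖₊ : ℝ≥0∞) ^ 2 :=
    ((measurable_id.sub hT).nnnorm.coe_nnreal_ennreal).pow_const 2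
  have hm1 : Measurable fun x : EuclideanSpace ℝ (Fin d) => (‖x‖₊ : ℝ≥0∞) ^ 2 :=
    measurable_nnnorm.coe_nnreal_ennreal.pow_const 2
  have hc2top : c2 ≠ ⊤ := by
    have hle : c2 ≤ ∫⁻ x, (3 * (‖x‖₊ : ℝ≥0∞) ^ 2 + 3 * (‖T x‖₊ : ℝ≥0∞) ^ 2) ∂μ₀ :=
      lintegral_mono fun x => nnnorm_sq_sub_le x (T x)
    rw [lintegral_add_left (hm1.const_mul 3),
      lintegral_const_mul 3 hm1,
      lintegral_const_mul 3 ((hT.nnnorm.coe_nnreal_ennreal).pow_const 2)] at hle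
    have hTmom : ∫⁻ x, (‖T x‖₊ : ℝ≥0∞) ^ 2 ∂μ₀ = ∫⁻ y, (‖y‖₊ : ℝ≥0∞) ^ 2 ∂μ₁ := by
      rw [← hpush, lintegral_map hm1 hT]
    rw [hTmom] at hle
    exact ne_top_of_le_ne_top (ENNReal.add_ne_top.2
      ⟨ENNReal.mul_ne_top (by simp) hμ₀2, ENNReal.mul_ne_top (by simp) hμ₁2⟩) hle
  -- identify W2E μ₀ μ₁ with c2
  have hW01 : W2E μ₀ μ₁ = c2 := by
    have hle : W2E μ₀ μ₁ ≤ c2 := by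
      have h1 : (μ₀.map fun x => (x, T x)).map Prod.fst = μ₀ := by
        rw [Measure.map_map measurable_fst hmpairT]; exact Measure.map_id'
      have h2 : (μ₀.map fun x => (x, T x)).map Prod.snd = μ₁ := by
        rw [Measure.map_map measurable_snd hmpairT, ← hpush]; rfl
      refine le_trans (W2E_le_cost h1 h2) (le_of_eq ?_)
      rw [cost, lintegral_map costMeasurable hmpairT, hc2def]
    have heq : W2sq μ₀ μ₁ = c2.toReal := by
      rw [← hoptimal,
        integral_eq_lintegral_of_nonneg_ae (f := fun x => ‖x - T x‖ ^ 2) (ae_of_all _ fun x => sq_nonneg _)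
          (((measurable_id'.sub hT).norm.pow_const 2).aestronglyMeasurable)]
      congr 1
      refine lintegral_congr fun x => ?_
      rw [ENNReal.ofReal_pow (norm_nonneg _), ofReal_norm, enorm_eq_nnnorm]
    exact (ENNReal.toReal_eq_toReal_iff' (ne_top_of_le_ne_top hc2top hle) hc2top).mp
      ((W2sq_def μ₀ μ₁).symm.trans heq)
  set l : ℝ≥0∞ := ENNReal.ofReal lam with hldef
  set m : ℝ≥0∞ := ENNReal.ofReal (1 - lam) with hmdef
  have hlm : l + m = 1 := by
    rw [hldef, hmdef, ← ENNReal.ofReal_add hlam0 (by linarith)]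
    norm_num
  have hltop : l ≠ ⊤ := ENNReal.ofReal_ne_top
  have hmtop : m ≠ ⊤ := ENNReal.ofReal_ne_top
  -- the two map couplings along the interpolation
  have hA_le : W2E μ₀ μlam ≤ l ^ 2 * c2 := by
    have h1 : (μ₀.map fun x => (x, Slam x)).map Prod.fst = μ₀ := by
      rw [Measure.map_map measurable_fst hmpair0]; exact Measure.map_id'
    have h2 : (μ₀.map fun x => (x, Slam x)).map Prod.snd = μlam := by
      rw [Measure.map_map measurable_snd hmpair0, hμlam]; rfl
    refine le_trans (W2E_le_cost h1 h2) (le_of_eq ?_)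
    rw [cost, lintegral_map costMeasurable hmpair0, hc2def, ← lintegral_const_mul _ hmxT]
    refine lintegral_congr fun x => ?_
    simp only
    rw [show x - Slam x = lam • (x - T x) from hptw0 x, nnnorm_smul, ENNReal.coe_mul,
      mul_pow, ← enorm_eq_nnnorm, Real.enorm_eq_ofReal hlam0, hldef]
  have hB_le : W2E μlam μ₁ ≤ m ^ 2 * c2 := by
    have h1 : (μ₀.map fun x => (Slam x, T x)).map Prod.fst = μlam := by
      rw [Measure.map_map measurable_fst hmpair1, hμlam]; rfl
    have h2 : (μ₀.map fun x => (Slam x, T x)).map Prod.snd = μ₁ := by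
      rw [Measure.map_map measurable_snd hmpair1, ← hpush]; rfl
    refine le_trans (W2E_le_cost h1 h2) (le_of_eq ?_)
    rw [cost, lintegral_map costMeasurable hmpair1, hc2def, ← lintegral_const_mul _ hmxT]
    refine lintegral_congr fun x => ?_
    simp only
    rw [show Slam x - T x = (1 - lam) • (x - T x) from hptw1 x, nnnorm_smul, ENNReal.coe_mul,
      mul_pow, ← enorm_eq_nnnorm, Real.enorm_eq_ofReal (by linarith : (0:ℝ) ≤ 1 - lam), hmdef]
  set C : ℝ≥0∞ := c2 ^ (1/2 : ℝ) with hCdef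
  have hC2 : C ^ (2 : ℕ) = c2 := by rw [hCdef]; exact rpow_half_sq c2
  have hCtop : C ≠ ⊤ := by rw [hCdef]; exact ENNReal.rpow_ne_top_of_nonneg (by norm_num) hc2top
  set A : ℝ≥0∞ := (W2E μ₀ μlam) ^ (1/2 : ℝ) with hAdef
  set B : ℝ≥0∞ := (W2E μlam μ₁) ^ (1/2 : ℝ) with hBdef
  have hple : ∀ r W : ℝ≥0∞, W ≤ r ^ 2 * c2 → W ^ (1/2 : ℝ) ≤ r * C := by
    intro r W h
    rw [hCdef]
    calc W ^ (1/2 : ℝ) ≤ (r ^ 2 * c2) ^ (1/2 : ℝ) := ENNReal.rpow_le_rpow h (by norm_num)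
      _ = (r ^ (2 : ℕ)) ^ (1/2 : ℝ) * c2 ^ (1/2 : ℝ) :=
          ENNReal.mul_rpow_of_nonneg _ _ (by norm_num)
      _ = r * c2 ^ (1/2 : ℝ) := by
          rw [← ENNReal.rpow_natCast r 2, ← ENNReal.rpow_mul]; norm_num
  have hAle : A ≤ l * C := by rw [hAdef]; exact hple l _ hA_le
  have hBle : B ≤ m * C := by rw [hBdef]; exact hple m _ hB_le
  have htri : C ≤ A + B := by
    have h := W2E_triangle μ₀ μlam μ₁
    rw [hW01] at h
    rw [hCdef, hAdef, hBdef]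
    exact h
  have hmC : m * C ≠ ⊤ := ENNReal.mul_ne_top hmtop hCtop
  have hlC : l * C ≠ ⊤ := ENNReal.mul_ne_top hltop hCtop
  have hsum : l * C + m * C = C := by rw [← add_mul, hlm, one_mul]
  have hA : A = l * C := by
    refine le_antisymm hAle ?_
    have h2 : C ≤ A + m * C := htri.trans (add_le_add_right hBle A)
    have h3 : C - m * C ≤ A := tsub_le_iff_right.mpr h2
    rwa [← ENNReal.eq_sub_of_add_eq hmC hsum] at h3
  have hB : B = m * C := by
    refine le_antisymm hBle ?_
    have h2 : C ≤ l * C + B := htri.trans (add_le_add_left hAle B)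
    have h3 : C - l * C ≤ B := tsub_le_iff_left.mpr h2
    have hsum' : m * C + l * C = C := by rw [add_comm]; exact hsum
    rwa [← ENNReal.eq_sub_of_add_eq hlC hsum'] at h3
  have hW0lam : W2E μ₀ μlam = l ^ 2 * c2 := by
    have h := (rpow_half_sq (W2E μ₀ μlam)).symm
    rw [← hAdef, hA, mul_pow, hC2] at h
    exact h
  have hWlam1 : W2E μlam μ₁ = m ^ 2 * c2 := by
    have h := (rpow_half_sq (W2E μlam μ₁)).symm
    rw [← hBdef, hB, mul_pow, hC2] at h
    exact h
  set w : ℝ := c2.toReal with hwdef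
  have hw01 : W2sq μ₀ μ₁ = w := by rw [W2sq_def, hW01, hwdef]
  have hltoR : l.toReal = lam := by rw [hldef, ENNReal.toReal_ofReal hlam0]
  have hmtoR : m.toReal = 1 - lam := by
    rw [hmdef, ENNReal.toReal_ofReal (by linarith : (0:ℝ) ≤ 1 - lam)]
  have h0lamR : W2sq μ₀ μlam = lam ^ 2 * w := by
    rw [W2sq_def, hW0lam, ENNReal.toReal_mul, ENNReal.toReal_pow, hltoR, hwdef]
  have hlam0R : W2sq μlam μ₀ = lam ^ 2 * w := by
    rw [W2sq_def, W2E_comm, hW0lam, ENNReal.toReal_mul, ENNReal.toReal_pow, hltoR, hwdef]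
  have hlam1R : W2sq μlam μ₁ = (1 - lam) ^ 2 * w := by
    rw [W2sq_def, hWlam1, ENNReal.toReal_mul, ENNReal.toReal_pow, hmtoR, hwdef]
  have key3 : (1 - lam) * W2sq μlam μ₀ + lam * W2sq μlam μ₁
      = lam * (1 - lam) * W2sq μ₀ μ₁ := by
    rw [hlam0R, hlam1R, hw01]; ring
  refine ⟨?_, ?_, key3⟩
  · have g1 : ∫ x, ‖x - ((1 - lam) • x + lam • T x)‖ ^ 2 ∂μ₀
        = lam ^ 2 * ∫ x, ‖x - T x‖ ^ 2 ∂μ₀ := by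
      rw [← integral_const_mul]
      refine integral_congr_ae (ae_of_all _ fun x => ?_)
      show ‖x - ((1 - lam) • x + lam • T x)‖ ^ 2 = lam ^ 2 * ‖x - T x‖ ^ 2
      rw [show x - ((1 - lam) • x + lam • T x) = lam • (x - T x) from hptw0 x,
        norm_smul, Real.norm_of_nonneg hlam0, mul_pow]
    rw [g1, hoptimal, hw01, h0lamR]
  · intro ν hνP hν2
    haveI := hνP
    have haT : W2E ν μ₀ ≠ ⊤ := W2E_ne_top ν μ₀ hν2 hμ₀2
    have hbT : W2E ν μ₁ ≠ ⊤ := W2E_ne_top ν μ₁ hν2 hμ₁2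
    set a : ℝ≥0∞ := (W2E ν μ₀) ^ (1/2 : ℝ) with hadef
    set b : ℝ≥0∞ := (W2E ν μ₁) ^ (1/2 : ℝ) with hbdef
    have hatop : a ≠ ⊤ := by
      rw [hadef]; exact ENNReal.rpow_ne_top_of_nonneg (by norm_num) haT
    have hbtop : b ≠ ⊤ := by
      rw [hbdef]; exact ENNReal.rpow_ne_top_of_nonneg (by norm_num) hbT
    have ha2 : W2sq ν μ₀ = a.toReal ^ 2 := by
      rw [W2sq_def, ← ENNReal.toReal_pow]
      congr 1
      rw [hadef, rpow_half_sq]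
    have hb2 : W2sq ν μ₁ = b.toReal ^ 2 := by
      rw [W2sq_def, ← ENNReal.toReal_pow]
      congr 1
      rw [hbdef, rpow_half_sq]
    have htri2 : C.toReal ≤ a.toReal + b.toReal := by
      have h := W2E_triangle μ₀ ν μ₁
      rw [hW01, W2E_comm μ₀ ν] at h
      have h' : C ≤ a + b := by rw [hCdef, hadef, hbdef]; exact h
      calc C.toReal ≤ (a + b).toReal :=
            ENNReal.toReal_mono (ENNReal.add_ne_top.2 ⟨hatop, hbtop⟩) h'
        _ = a.toReal + b.toReal := ENNReal.toReal_add hatop hbtop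
    have hwC : w = C.toReal ^ 2 := by rw [← ENNReal.toReal_pow, hC2, hwdef]
    rw [key3, hw01, ha2, hb2, hwC]
    have h0a : 0 ≤ a.toReal := ENNReal.toReal_nonneg
    have h0b : 0 ≤ b.toReal := ENNReal.toReal_nonneg
    have h0C : 0 ≤ C.toReal := ENNReal.toReal_nonneg
    have hsq : C.toReal ^ 2 ≤ (a.toReal + b.toReal) ^ 2 := by nlinarith
    nlinarith [sq_nonneg ((1 - lam) * a.toReal - lam * b.toReal),
      mul_le_mul_of_nonneg_left hsq (mul_nonneg hlam0 (by linarith : (0:ℝ) ≤ 1 - lam))]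
end

section
/- Fix K > 0 and λ ∈ [0,1]. Let μ_{0,λ} be the uniform distribution on the interval [K − λ(K + 1/2), K − λ(K + 1/2) + 1] (the geometric repair at level λ of the uniform distribution on [K, K+1] toward the midpoint barycenter uniform on [−1/2, 1/2]) and let μ_{1,λ} be the uniform distribution on [−(K+1) + λ(K + 1/2), −(K+1) + λ(K + 1/2) + 1] (the geometric repair at level λ of the uniform distribution on [−K−1, −K]). Then d_TV(μ_{0,λ}, μ_{1,λ}) = min(1, (1−λ)(2K+1)); in particular d_TV(μ_{0,λ}, μ_{1,λ}) = 1 whenever λ ≤ 2K/(2K+1). -/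
open MeasureTheory ProbabilityTheory ENNReal

noncomputable def dTV {E : Type*} [MeasurableSpace E] (μ ν : Measure E) : ℝ :=
  ⨆ A : {A : Set E // MeasurableSet A}, |(μ A.1).toReal - (ν A.1).toReal|

lemma dTV_uniform_shift (a b : ℝ) (hba : b ≤ a) :
    dTV (volume.restrict (Set.Icc a (a+1))) (volume.restrict (Set.Icc b (b+1)))
      = min 1 (a - b) := by
  have hd : 0 ≤ a - b := sub_nonneg.2 hba
  set μ := volume.restrict (Set.Icc a (a+1)) with hμdef
  set ν := volume.restrict (Set.Icc b (b+1)) with hνdef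
  have hI0 : volume (Set.Icc a (a+1)) = ENNReal.ofReal 1 := by
    rw [Real.volume_Icc]; norm_num
  have hI1 : volume (Set.Icc b (b+1)) = ENNReal.ofReal 1 := by
    rw [Real.volume_Icc]; norm_num
  have hbound : ∀ A : {A : Set ℝ // MeasurableSet A},
      |(μ A.1).toReal - (ν A.1).toReal| ≤ min 1 (a - b) := by
    intro A
    have hμA : μ A.1 = volume (A.1 ∩ Set.Icc a (a+1)) := Measure.restrict_apply A.2
    have hνA : ν A.1 = volume (A.1 ∩ Set.Icc b (b+1)) := Measure.restrict_apply A.2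
    have hfin0 : volume (A.1 ∩ Set.Icc a (a+1)) ≠ ⊤ := by
      refine ne_top_of_le_ne_top ?_ (measure_mono Set.inter_subset_right)
      rw [hI0]; exact ofReal_ne_top
    have hfin1 : volume (A.1 ∩ Set.Icc b (b+1)) ≠ ⊤ := by
      refine ne_top_of_le_ne_top ?_ (measure_mono Set.inter_subset_right)
      rw [hI1]; exact ofReal_ne_top
    have hx1 : (μ A.1).toReal ≤ 1 := by
      rw [hμA]
      have := ENNReal.toReal_mono (by rw [hI0]; exact ofReal_ne_top)
        (measure_mono (Set.inter_subset_right : A.1 ∩ Set.Icc a (a+1) ⊆ _))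
      rwa [hI0, ENNReal.toReal_ofReal (by norm_num)] at this
    have hy1 : (ν A.1).toReal ≤ 1 := by
      rw [hνA]
      have := ENNReal.toReal_mono (by rw [hI1]; exact ofReal_ne_top)
        (measure_mono (Set.inter_subset_right : A.1 ∩ Set.Icc b (b+1) ⊆ _))
      rwa [hI1, ENNReal.toReal_ofReal (by norm_num)] at this
    have hx0 : 0 ≤ (μ A.1).toReal := ENNReal.toReal_nonneg
    have hy0 : 0 ≤ (ν A.1).toReal := ENNReal.toReal_nonneg
    have hkey0 : (μ A.1).toReal ≤ (ν A.1).toReal + (a - b) := by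
      have hsub : A.1 ∩ Set.Icc a (a+1) ⊆ (A.1 ∩ Set.Icc b (b+1)) ∪ Set.Ioc (b+1) (a+1) := by
        rintro x ⟨hxA, hxa, hxa1⟩
        rcases le_or_gt x (b+1) with h | h
        · exact Or.inl ⟨hxA, hba.trans hxa, h⟩
        · exact Or.inr ⟨h, hxa1⟩
      have h1 : volume (A.1 ∩ Set.Icc a (a+1))
          ≤ volume (A.1 ∩ Set.Icc b (b+1)) + ENNReal.ofReal (a - b) := by
        calc volume (A.1 ∩ Set.Icc a (a+1))
            ≤ volume ((A.1 ∩ Set.Icc b (b+1)) ∪ Set.Ioc (b+1) (a+1)) := measure_mono hsub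
          _ ≤ volume (A.1 ∩ Set.Icc b (b+1)) + volume (Set.Ioc (b+1) (a+1)) :=
              measure_union_le _ _
          _ = volume (A.1 ∩ Set.Icc b (b+1)) + ENNReal.ofReal (a - b) := by
              rw [Real.volume_Ioc]; ring_nf
      rw [hμA, hνA]
      have := ENNReal.toReal_mono (ENNReal.add_ne_top.2 ⟨hfin1, ofReal_ne_top⟩) h1
      rwa [ENNReal.toReal_add hfin1 ofReal_ne_top, ENNReal.toReal_ofReal hd] at this
    have hkey1 : (ν A.1).toReal ≤ (μ A.1).toReal + (a - b) := by
      have hsub : A.1 ∩ Set.Icc b (b+1) ⊆ (A.1 ∩ Set.Icc a (a+1)) ∪ Set.Ico b a := by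
        rintro x ⟨hxA, hxb, hxb1⟩
        rcases le_or_gt a x with h | h
        · exact Or.inl ⟨hxA, h, hxb1.trans (by linarith)⟩
        · exact Or.inr ⟨hxb, h⟩
      have h1 : volume (A.1 ∩ Set.Icc b (b+1))
          ≤ volume (A.1 ∩ Set.Icc a (a+1)) + ENNReal.ofReal (a - b) := by
        calc volume (A.1 ∩ Set.Icc b (b+1))
            ≤ volume ((A.1 ∩ Set.Icc a (a+1)) ∪ Set.Ico b a) := measure_mono hsub
          _ ≤ volume (A.1 ∩ Set.Icc a (a+1)) + volume (Set.Ico b a) := measure_union_le _ _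
          _ = volume (A.1 ∩ Set.Icc a (a+1)) + ENNReal.ofReal (a - b) := by
              rw [Real.volume_Ico]
      rw [hμA, hνA]
      have := ENNReal.toReal_mono (ENNReal.add_ne_top.2 ⟨hfin0, ofReal_ne_top⟩) h1
      rwa [ENNReal.toReal_add hfin0 ofReal_ne_top, ENNReal.toReal_ofReal hd] at this
    exact le_min (abs_le.2 ⟨by linarith, by linarith⟩) (abs_le.2 ⟨by linarith, by linarith⟩)
  -- the witness set
  set A0 : {A : Set ℝ // MeasurableSet A} := ⟨Set.Ioc (b+1) (a+1), measurableSet_Ioc⟩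
  have hνA0 : ν A0.1 = 0 := by
    rw [Measure.restrict_apply A0.2]
    have : Set.Ioc (b+1) (a+1) ∩ Set.Icc b (b+1) = ∅ := by
      ext x
      simp only [Set.mem_inter_iff, Set.mem_Ioc, Set.mem_Icc, Set.mem_empty_iff_false,
        iff_false, not_and]
      intro h1 _ _
      linarith [h1.1]
    rw [this, measure_empty]
  have hμA0 : μ A0.1 = ENNReal.ofReal (min 1 (a - b)) := by
    rw [Measure.restrict_apply A0.2]
    set m := max a (b+1) with hm
    have hsub1 : Set.Ioc m (a+1) ⊆ Set.Ioc (b+1) (a+1) ∩ Set.Icc a (a+1) := by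
      rintro x ⟨hx1, hx2⟩
      exact ⟨⟨lt_of_le_of_lt (le_max_right _ _) hx1, hx2⟩,
        (le_max_left _ _).trans hx1.le, hx2⟩
    have hsub2 : Set.Ioc (b+1) (a+1) ∩ Set.Icc a (a+1) ⊆ Set.Icc m (a+1) := by
      rintro x ⟨⟨hx1, hx2⟩, hx3, _⟩
      exact ⟨max_le hx3 hx1.le, hx2⟩
    have heq : a + 1 - m = min 1 (a - b) := by
      rcases le_total (b+1) a with h | h
      · rw [hm, max_eq_left h, min_eq_left (by linarith)]; ring
      · rw [hm, max_eq_right h, min_eq_right (by linarith)]; ring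
    refine le_antisymm ?_ ?_
    · have := measure_mono (μ := (volume : Measure ℝ)) hsub2
      rwa [Real.volume_Icc, show a + 1 - m = min 1 (a-b) from heq] at this
    · have := measure_mono (μ := (volume : Measure ℝ)) hsub1
      rwa [Real.volume_Ioc, show a + 1 - m = min 1 (a-b) from heq] at this
  have hBdd : BddAbove (Set.range fun A : {A : Set ℝ // MeasurableSet A} =>
      |(μ A.1).toReal - (ν A.1).toReal|) := by
    refine ⟨min 1 (a - b), ?_⟩
    rintro x ⟨A, rfl⟩
    exact hbound A
  refine le_antisymm (ciSup_le hbound) ?_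
  have : |(μ A0.1).toReal - (ν A0.1).toReal| = min 1 (a - b) := by
    rw [hμA0, hνA0, ENNReal.toReal_ofReal (le_min (by norm_num) hd)]
    rw [ENNReal.toReal_zero, sub_zero, abs_of_nonneg (le_min (by norm_num) hd)]
  calc min 1 (a - b) = |(μ A0.1).toReal - (ν A0.1).toReal| := this.symm
    _ ≤ _ := le_ciSup hBdd A0

/-- **Geometric repair may not reduce total variation.** For `K > 0` and `λ ∈ [0,1]`,
the geometric repairs at level `λ` of the uniform laws on `[K, K+1]` and
`[−K−1, −K]` toward their midpoint barycenter (uniform on `[−1/2,1/2]`) are the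
uniform laws `μ_{0,λ}` on `[K − λ(K+1/2), K − λ(K+1/2)+1]` and `μ_{1,λ}` on
`[−(K+1) + λ(K+1/2), −(K+1) + λ(K+1/2)+1]`, and
`d_TV(μ_{0,λ}, μ_{1,λ}) = min(1, (1−λ)(2K+1))`; in particular the distance is `1`
whenever `λ ≤ 2K/(2K+1)`. -/
theorem dTV_geometric_repair_uniform
    (K : ℝ) (hK : 0 < K) (lam : ℝ) (hlam : lam ∈ Set.Icc (0 : ℝ) 1)
    (μ0lam μ1lam : Measure ℝ)
    (hμ0 : μ0lam = volume.restrict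
      (Set.Icc (K - lam * (K + 1 / 2)) (K - lam * (K + 1 / 2) + 1)))
    (hμ1 : μ1lam = volume.restrict
      (Set.Icc (-(K + 1) + lam * (K + 1 / 2)) (-(K + 1) + lam * (K + 1 / 2) + 1))) :
    dTV μ0lam μ1lam = min 1 ((1 - lam) * (2 * K + 1))
      ∧ (lam ≤ 2 * K / (2 * K + 1) → dTV μ0lam μ1lam = 1) := by
  obtain ⟨hlam0, hlam1⟩ := hlam
  set a := K - lam * (K + 1 / 2) with ha
  set b := -(K + 1) + lam * (K + 1 / 2) with hb
  have hba : b ≤ a := by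
    show -(K + 1) + lam * (K + 1 / 2) ≤ K - lam * (K + 1 / 2)
    nlinarith
  have hab : a - b = (1 - lam) * (2 * K + 1) := by
    show K - lam * (K + 1 / 2) - (-(K + 1) + lam * (K + 1 / 2)) = _
    ring
  have hmain : dTV μ0lam μ1lam = min 1 ((1 - lam) * (2 * K + 1)) := by
    rw [hμ0, hμ1, dTV_uniform_shift a b hba, hab]
  refine ⟨hmain, fun hle => ?_⟩
  rw [hmain]
  have h2K : (0:ℝ) < 2 * K + 1 := by linarith
  have hml : lam * (2 * K + 1) ≤ 2 * K := (le_div_iff₀ h2K).mp hle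
  rw [min_eq_left (by nlinarith)]
end
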